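/- arXiv:0712.3687 — 3 statements merged into one kernel-verified Lean document; each statement's English description precedes it below -/
import Mathlib

section
/- The emptied unit cube X = [0,1]³ \ ((0,1)² × [0,1)) ⊆ ℝ³ is homeomorphic to the closed unit disk {z ∈ ℝ² : |z| ≤ 1}. -/
/-- The closed unit cube `[0,1]³` in `ℝ³`. -/
def unitCube : Set (EuclideanSpace ℝ (Fin 3)) :=
  {p | ∀ i, p i ∈ Set.Icc (0 : ℝ) 1}

/-- The half-open column `(0,1)² × [0,1)`. -/
def removedColumn : Set (EuclideanSpace ℝ (Fin 3)) :=
  {p | p 0 ∈ Set.Ioo (0 : ℝ) 1 ∧ p 1 ∈ Set.Ioo (0 : ℝ) 1 ∧ p 2 ∈ Set.Ico (0 : ℝ) 1}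

/-- The emptied unit cube with bottom removed: `[0,1]³ \ ((0,1)² × [0,1))`. -/
def emptiedCube : Set (EuclideanSpace ℝ (Fin 3)) := unitCube \ removedColumn

open Set Metric

noncomputable def unfoldMap : EuclideanSpace ℝ (Fin 3) → EuclideanSpace ℝ (Fin 2) :=
  fun p => WithLp.toLp 2 (fun i => (2 - p 2) * (p (Fin.castSucc i) - 1/2))

def sq2 : Set (EuclideanSpace ℝ (Fin 2)) := {q | |q 0| ≤ 1 ∧ |q 1| ≤ 1}

lemma unfoldMap_apply0 (p : EuclideanSpace ℝ (Fin 3)) :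
    unfoldMap p 0 = (2 - p 2) * (p 0 - 1/2) := rfl

lemma unfoldMap_apply1 (p : EuclideanSpace ℝ (Fin 3)) :
    unfoldMap p 1 = (2 - p 2) * (p 1 - 1/2) := rfl

lemma mem_emptiedCube_iff (p : EuclideanSpace ℝ (Fin 3)) :
    p ∈ emptiedCube ↔ (∀ i, 0 ≤ p i ∧ p i ≤ 1) ∧
      (p 0 = 0 ∨ p 0 = 1 ∨ p 1 = 0 ∨ p 1 = 1 ∨ p 2 = 1) := by
  constructor
  · rintro ⟨hc, hr⟩
    refine ⟨hc, ?_⟩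
    by_contra h
    push_neg at h
    obtain ⟨h0, h1, h2, h3, h4⟩ := h
    exact hr ⟨⟨(hc 0).1.lt_of_ne (Ne.symm h0), (hc 0).2.lt_of_ne h1⟩,
      ⟨(hc 1).1.lt_of_ne (Ne.symm h2), (hc 1).2.lt_of_ne h3⟩,
      (hc 2).1, (hc 2).2.lt_of_ne h4⟩
  · rintro ⟨hc, h⟩
    refine ⟨hc, fun ⟨h0, h1, h2⟩ => ?_⟩
    rcases h with h | h | h | h | h
    · exact absurd h h0.1.ne'
    · exact absurd h h0.2.ne
    · exact absurd h h1.1.ne'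
    · exact absurd h h1.2.ne
    · exact absurd h h2.2.ne

/-- z-coordinate is recovered from the image. -/
lemma z_recover {p : EuclideanSpace ℝ (Fin 3)} (hp : p ∈ emptiedCube) :
    p 2 = min 1 (2 - 2 * max |unfoldMap p 0| |unfoldMap p 1|) := by
  rw [mem_emptiedCube_iff] at hp
  obtain ⟨hc, h⟩ := hp
  have hz0 := (hc 2).1
  have hz1 := (hc 2).2
  have h2z : (0:ℝ) ≤ 2 - p 2 := by linarith
  have e0 : |unfoldMap p 0| = (2 - p 2) * |p 0 - 1/2| := by
    rw [unfoldMap_apply0, abs_mul, abs_of_nonneg h2z]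
  have e1 : |unfoldMap p 1| = (2 - p 2) * |p 1 - 1/2| := by
    rw [unfoldMap_apply1, abs_mul, abs_of_nonneg h2z]
  have hd0 : |p 0 - 1/2| ≤ 1/2 := abs_le.2 ⟨by linarith [(hc 0).1], by linarith [(hc 0).2]⟩
  have hd1 : |p 1 - 1/2| ≤ 1/2 := abs_le.2 ⟨by linarith [(hc 1).1], by linarith [(hc 1).2]⟩
  rcases h with h | h | h | h | h
  · -- wall p0 = 0, |p0 - 1/2| = 1/2 is the max
    have : |p 0 - 1/2| = 1/2 := by rw [h]; norm_num
    have hm : max |unfoldMap p 0| |unfoldMap p 1| = (2 - p 2) * (1/2) := by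
      rw [e0, e1, this, max_eq_left (by nlinarith)]
    rw [hm, min_eq_right (by linarith)]; ring
  · have : |p 0 - 1/2| = 1/2 := by rw [h]; norm_num
    have hm : max |unfoldMap p 0| |unfoldMap p 1| = (2 - p 2) * (1/2) := by
      rw [e0, e1, this, max_eq_left (by nlinarith)]
    rw [hm, min_eq_right (by linarith)]; ring
  · have : |p 1 - 1/2| = 1/2 := by rw [h]; norm_num
    have hm : max |unfoldMap p 0| |unfoldMap p 1| = (2 - p 2) * (1/2) := by
      rw [e0, e1, this, max_eq_right (by nlinarith)]
    rw [hm, min_eq_right (by linarith)]; ring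
  · have : |p 1 - 1/2| = 1/2 := by rw [h]; norm_num
    have hm : max |unfoldMap p 0| |unfoldMap p 1| = (2 - p 2) * (1/2) := by
      rw [e0, e1, this, max_eq_right (by nlinarith)]
    rw [hm, min_eq_right (by linarith)]; ring
  · -- top: z = 1
    have hm : max |unfoldMap p 0| |unfoldMap p 1| ≤ 1/2 := by
      rw [e0, e1, h]
      exact max_le (by linarith) (by linarith)
    rw [min_eq_left (by linarith), h]

lemma unfold_injOn : Set.InjOn unfoldMap emptiedCube := by
  intro p hp q hq hpq
  have h0 : unfoldMap p 0 = unfoldMap q 0 := congrFun (congrArg WithLp.ofLp hpq) 0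
  have h1 : unfoldMap p 1 = unfoldMap q 1 := congrFun (congrArg WithLp.ofLp hpq) 1
  have hz : p 2 = q 2 := by rw [z_recover hp, z_recover hq, h0, h1]
  have h2z : (0:ℝ) < 2 - p 2 := by
    have := ((mem_emptiedCube_iff p).1 hp).1 2
    linarith [this.2]
  rw [unfoldMap_apply0, unfoldMap_apply0, hz] at h0
  rw [unfoldMap_apply1, unfoldMap_apply1, hz] at h1
  rw [hz] at h2z
  have e0 := mul_left_cancel₀ h2z.ne' h0
  have e1 := mul_left_cancel₀ h2z.ne' h1
  ext i
  fin_cases i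
  · show p 0 = q 0; linarith
  · show p 1 = q 1; linarith
  · exact hz

lemma unfold_mapsTo : Set.MapsTo unfoldMap emptiedCube sq2 := by
  intro p hp
  obtain ⟨hc, _⟩ := (mem_emptiedCube_iff p).1 hp
  have h2z : (0:ℝ) ≤ 2 - p 2 := by linarith [(hc 2).2]
  have h2z2 : 2 - p 2 ≤ 2 := by linarith [(hc 2).1]
  have hd0 : |p 0 - 1/2| ≤ 1/2 := abs_le.2 ⟨by linarith [(hc 0).1], by linarith [(hc 0).2]⟩
  have hd1 : |p 1 - 1/2| ≤ 1/2 := abs_le.2 ⟨by linarith [(hc 1).1], by linarith [(hc 1).2]⟩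
  constructor
  · rw [unfoldMap_apply0, abs_mul, abs_of_nonneg h2z]
    nlinarith [abs_nonneg (p 0 - 1/2)]
  · rw [unfoldMap_apply1, abs_mul, abs_of_nonneg h2z]
    nlinarith [abs_nonneg (p 1 - 1/2)]

lemma unfold_surjOn : Set.SurjOn unfoldMap emptiedCube sq2 := by
  rintro q ⟨hq0, hq1⟩
  set s : ℝ := max |q 0| |q 1| with hs
  have hs0 : 0 ≤ s := le_max_of_le_left (abs_nonneg _)
  have hs1 : s ≤ 1 := max_le hq0 hq1
  have habs0 : |q 0| ≤ s := le_max_left _ _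
  have habs1 : |q 1| ≤ s := le_max_right _ _
  rcases le_or_gt s (1/2) with hcase | hcase
  · -- top face preimage
    have hb0 := abs_le.1 (habs0.trans hcase)
    have hb1 := abs_le.1 (habs1.trans hcase)
    refine ⟨WithLp.toLp 2 (![q 0 + 1/2, q 1 + 1/2, 1] : Fin 3 → ℝ), ?_, ?_⟩
    · rw [mem_emptiedCube_iff]
      refine ⟨fun i => ?_, Or.inr (Or.inr (Or.inr (Or.inr (by simp))))⟩
      fin_cases i <;> simp <;> constructor <;> linarith
    · ext i
      fin_cases i <;> simp [unfoldMap] <;> ring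
  · -- wall preimage
    have hspos : (0:ℝ) < 2 * s := by linarith
    have hb0 : |q 0 / (2*s)| ≤ 1/2 := by
      rw [abs_div, abs_of_pos hspos, div_le_iff₀ hspos]
      nlinarith
    have hb1 : |q 1 / (2*s)| ≤ 1/2 := by
      rw [abs_div, abs_of_pos hspos, div_le_iff₀ hspos]
      nlinarith
    have hb0' := abs_le.1 hb0
    have hb1' := abs_le.1 hb1
    refine ⟨WithLp.toLp 2 (![q 0 / (2*s) + 1/2, q 1 / (2*s) + 1/2, 2 - 2*s] : Fin 3 → ℝ), ?_, ?_⟩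
    · rw [mem_emptiedCube_iff]
      refine ⟨fun i => ?_, ?_⟩
      · fin_cases i <;> simp <;> constructor <;> linarith
      · have hsne : s ≠ 0 := by linarith
        rcases max_cases |q 0| |q 1| with ⟨he, _⟩ | ⟨he, _⟩
        · rcases abs_cases (q 0) with ⟨ha, _⟩ | ⟨ha, _⟩
          · have hqe : q 0 = s := by rw [hs, he, ha]
            refine Or.inr (Or.inl ?_)
            show q 0 / (2*s) + 1/2 = 1
            rw [hqe]; field_simp; ring
          · have hqe : q 0 = -s := by rw [hs, he, ha, neg_neg]
            refine Or.inl ?_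
            show q 0 / (2*s) + 1/2 = 0
            rw [hqe]; field_simp; ring
        · rcases abs_cases (q 1) with ⟨ha, _⟩ | ⟨ha, _⟩
          · have hqe : q 1 = s := by rw [hs, he, ha]
            refine Or.inr (Or.inr (Or.inr (Or.inl ?_)))
            show q 1 / (2*s) + 1/2 = 1
            rw [hqe]; field_simp; ring
          · have hqe : q 1 = -s := by rw [hs, he, ha, neg_neg]
            refine Or.inr (Or.inr (Or.inl ?_))
            show q 1 / (2*s) + 1/2 = 0
            rw [hqe]; field_simp; ring
    · ext i
      fin_cases i <;> simp [unfoldMap] <;> field_simp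

lemma emptiedCube_isClosed : IsClosed emptiedCube := by
  have h1 : IsClosed unitCube := by
    have : unitCube = ⋂ i, (fun p : EuclideanSpace ℝ (Fin 3) => p i) ⁻¹' Set.Icc 0 1 := by
      ext p; simp [unitCube]
    rw [this]
    exact isClosed_iInter fun i => IsClosed.preimage (PiLp.continuous_apply 2 (fun _ => ℝ) i) isClosed_Icc
  have h2 : emptiedCube = unitCube ∩ {p | p 0 ∈ Set.Ioo (0:ℝ) 1 ∧ p 1 ∈ Set.Ioo (0:ℝ) 1 ∧ p 2 < 1}ᶜ := by
    ext p
    constructor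
    · rintro ⟨hc, hr⟩
      exact ⟨hc, fun ⟨a, b, c⟩ => hr ⟨a, b, (hc 2).1, c⟩⟩
    · rintro ⟨hc, hr⟩
      exact ⟨hc, fun ⟨a, b, c⟩ => hr ⟨a, b, c.2⟩⟩
  rw [h2]
  refine h1.inter (isClosed_compl_iff.2 ?_)
  have : {p : EuclideanSpace ℝ (Fin 3) | p 0 ∈ Set.Ioo (0:ℝ) 1 ∧ p 1 ∈ Set.Ioo (0:ℝ) 1 ∧ p 2 < 1}
      = ((fun p : EuclideanSpace ℝ (Fin 3) => p 0) ⁻¹' Set.Ioo 0 1) ∩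
        ((fun p : EuclideanSpace ℝ (Fin 3) => p 1) ⁻¹' Set.Ioo 0 1) ∩
        ((fun p : EuclideanSpace ℝ (Fin 3) => p 2) ⁻¹' Set.Iio 1) := by
    ext p; simp [and_assoc]
  rw [this]
  exact ((isOpen_Ioo.preimage (PiLp.continuous_apply 2 (fun _ : Fin 3 => ℝ) 0)).inter
    (isOpen_Ioo.preimage (PiLp.continuous_apply 2 (fun _ : Fin 3 => ℝ) 1))).inter
    (isOpen_Iio.preimage (PiLp.continuous_apply 2 (fun _ : Fin 3 => ℝ) 2))

lemma emptiedCube_isCompact : IsCompact emptiedCube := by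
  refine Metric.isCompact_of_isClosed_isBounded emptiedCube_isClosed ?_
  refine (Metric.isBounded_iff_subset_closedBall 0).2 ⟨2, fun p hp => ?_⟩
  obtain ⟨hc, _⟩ := (mem_emptiedCube_iff p).1 hp
  simp only [Metric.mem_closedBall, dist_zero_right]
  rw [EuclideanSpace.norm_eq]
  have : ∑ i, ‖p i‖^2 ≤ 4 := by
    rw [Fin.sum_univ_three]
    have b0 := hc 0; have b1 := hc 1; have b2 := hc 2
    rw [Real.norm_eq_abs, Real.norm_eq_abs, Real.norm_eq_abs,
      abs_of_nonneg b0.1, abs_of_nonneg b1.1, abs_of_nonneg b2.1]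
    nlinarith [b0.1, b0.2, b1.1, b1.2, b2.1, b2.2]
  calc Real.sqrt (∑ i, ‖p i‖^2) ≤ Real.sqrt 4 := Real.sqrt_le_sqrt this
    _ = 2 := by rw [show (4:ℝ) = 2^2 by norm_num, Real.sqrt_sq (by norm_num)]

lemma sq2_isClosed : IsClosed sq2 := by
  have : sq2 = (fun q : EuclideanSpace ℝ (Fin 2) => q 0) ⁻¹' Set.Icc (-1) 1 ∩
      (fun q : EuclideanSpace ℝ (Fin 2) => q 1) ⁻¹' Set.Icc (-1) 1 := by
    ext q; simp [sq2, abs_le, Set.mem_Icc]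
  rw [this]
  exact (isClosed_Icc.preimage (PiLp.continuous_apply 2 (fun _ : Fin 2 => ℝ) 0)).inter (isClosed_Icc.preimage (PiLp.continuous_apply 2 (fun _ : Fin 2 => ℝ) 1))

lemma sq2_convex : Convex ℝ sq2 := by
  have : sq2 = (EuclideanSpace.proj (0 : Fin 2) : EuclideanSpace ℝ (Fin 2) →L[ℝ] ℝ) ⁻¹' Set.Icc (-1) 1 ∩
      (EuclideanSpace.proj (1 : Fin 2) : EuclideanSpace ℝ (Fin 2) →L[ℝ] ℝ) ⁻¹' Set.Icc (-1) 1 := by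
    ext q; simp [sq2, abs_le, Set.mem_Icc]
  rw [this]
  exact Convex.inter
    ((convex_Icc _ _).linear_preimage ((EuclideanSpace.proj (0 : Fin 2)).toLinearMap))
    ((convex_Icc _ _).linear_preimage ((EuclideanSpace.proj (1 : Fin 2)).toLinearMap))

lemma sq2_isBounded : Bornology.IsBounded sq2 := by
  refine (Metric.isBounded_iff_subset_closedBall 0).2 ⟨2, fun q hq => ?_⟩
  obtain ⟨h0, h1⟩ := hq
  simp only [Metric.mem_closedBall, dist_zero_right]
  rw [EuclideanSpace.norm_eq]
  have : ∑ i, ‖q i‖^2 ≤ 4 := by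
    rw [Fin.sum_univ_two, Real.norm_eq_abs, Real.norm_eq_abs]
    nlinarith [abs_nonneg (q 0), abs_nonneg (q 1)]
  calc Real.sqrt (∑ i, ‖q i‖^2) ≤ Real.sqrt 4 := Real.sqrt_le_sqrt this
    _ = 2 := by rw [show (4:ℝ) = 2^2 by norm_num, Real.sqrt_sq (by norm_num)]

lemma sq2_interior_nonempty : (interior sq2).Nonempty := by
  refine ⟨0, ?_⟩
  rw [mem_interior]
  refine ⟨Metric.ball 0 1, fun q hq => ?_, Metric.isOpen_ball, Metric.mem_ball_self one_pos⟩
  simp only [Metric.mem_ball, dist_zero_right] at hq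
  have key : ∀ i : Fin 2, |q i| ≤ ‖q‖ := by
    intro i
    rw [EuclideanSpace.norm_eq, ← Real.sqrt_sq_eq_abs]
    refine Real.sqrt_le_sqrt ?_
    rw [show q i ^ 2 = ‖q i‖^2 by rw [Real.norm_eq_abs, sq_abs]]
    exact Finset.single_le_sum (f := fun j => ‖q j‖^2) (fun j _ => sq_nonneg _) (Finset.mem_univ i)
  exact ⟨(key 0).trans hq.le, (key 1).trans hq.le⟩

/-- The emptied unit cube is homeomorphic to the closed unit disk in the plane. -/
theorem emptiedCube_homeomorphic_closedDisk :
    Nonempty (emptiedCube ≃ₜ (Metric.closedBall (0 : EuclideanSpace ℝ (Fin 2)) 1)) := by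
  have hbij : Set.BijOn unfoldMap emptiedCube sq2 :=
    ⟨unfold_mapsTo, unfold_injOn, unfold_surjOn⟩
  have hcont : Continuous unfoldMap := by
    refine (PiLp.continuous_toLp 2 (fun _ : Fin 2 => ℝ)).comp ?_
    apply continuous_pi
    intro i
    exact ((continuous_const.sub (PiLp.continuous_apply 2 (fun _ : Fin 3 => ℝ) 2))).mul
      ((PiLp.continuous_apply 2 (fun _ : Fin 3 => ℝ) _).sub continuous_const)
  have : CompactSpace emptiedCube := isCompact_iff_compactSpace.mp emptiedCube_isCompact
  have hcr : Continuous ⇑(hbij.equiv unfoldMap) := by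
    exact Continuous.subtype_mk (hcont.comp continuous_subtype_val) _
  have homeo1 : emptiedCube ≃ₜ sq2 := Continuous.homeoOfEquivCompactToT2 hcr
  obtain ⟨h, -, h2, -⟩ := exists_homeomorph_image_interior_closure_frontier_eq_unitBall
    sq2_convex sq2_interior_nonempty sq2_isBounded
  rw [sq2_isClosed.closure_eq] at h2
  exact ⟨homeo1.trans ((h.image sq2).trans (Homeomorph.setCongr h2))⟩
end

section
/- Let X = [0,1]³ \ ((0,1)² × [0,1)) carry its intrinsic metric d, and let ∂X = ([0,1]² \ (0,1)²) × {0} be its bottom rim. For any two points a,b ∈ ∂X, the intrinsic distance d(a,b) in X equals the intrinsic distance between a and b inside the rim ∂X itself, i.e. the shorter of the two arc lengths from a to b around the boundary square of the unit square. -/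
open Set ENNReal

/-- The bottom rim `([0,1]² \ (0,1)²) × {0}` of the emptied cube. -/
def bottomRim : Set (EuclideanSpace ℝ (Fin 3)) :=
  {p | (p 0 ∈ Set.Icc (0 : ℝ) 1 ∧ p 1 ∈ Set.Icc (0 : ℝ) 1) ∧
    ¬(p 0 ∈ Set.Ioo (0 : ℝ) 1 ∧ p 1 ∈ Set.Ioo (0 : ℝ) 1) ∧ p 2 = 0}

/-- The intrinsic (pseudo)distance of a subset `X ⊆ ℝ³`: the infimum of the Euclidean
lengths of continuous paths in `X` joining `x` to `y` (`∞` if there is none). -/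
noncomputable def intrinsicDist (X : Set (EuclideanSpace ℝ (Fin 3)))
    (x y : EuclideanSpace ℝ (Fin 3)) : ℝ≥0∞ :=
  ⨅ (γ : ℝ → EuclideanSpace ℝ (Fin 3)) (_ : ContinuousOn γ (Icc 0 1))
    (_ : MapsTo γ (Icc 0 1) X) (_ : γ 0 = x) (_ : γ 1 = y),
    eVariationOn γ (Icc 0 1)


abbrev E3 := EuclideanSpace ℝ (Fin 3)
open Set ENNReal NNReal
open Set ENNReal NNReal


-- coordinate distance bound
lemma coord_dist_le (p q : E3) (i : Fin 3) : dist (p i) (q i) ≤ dist p q := by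
  rw [EuclideanSpace.dist_eq]
  have h1 : dist (p i) (q i) = Real.sqrt (dist (p i) (q i) ^ 2) := by
    rw [Real.sqrt_sq dist_nonneg]
  rw [h1]
  exact Real.sqrt_le_sqrt (Finset.single_le_sum
    (f := fun j => dist (p j) (q j) ^ 2) (fun j _ => sq_nonneg _) (Finset.mem_univ i))

-- if two coordinates agree, dist equals remaining coordinate dist
lemma dist_eq_coord0 (p q : E3) (h1 : p 1 = q 1) (h2 : p 2 = q 2) :
    dist p q = |p 0 - q 0| := by
  rw [EuclideanSpace.dist_eq, Fin.sum_univ_three, h1, h2]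
  simp [Real.dist_eq, Real.sqrt_sq_eq_abs]

lemma dist_eq_coord1 (p q : E3) (h1 : p 0 = q 0) (h2 : p 2 = q 2) :
    dist p q = |p 1 - q 1| := by
  rw [EuclideanSpace.dist_eq, Fin.sum_univ_three, h1, h2]
  simp [Real.dist_eq, Real.sqrt_sq_eq_abs]

-- Lipschitz gives variation bound on Icc
lemma lipVar {f : ℝ → E3} {C : ℝ≥0} {a b : ℝ} (h : LipschitzOnWith C f (Icc a b))
    (hab : a ≤ b) : eVariationOn f (Icc a b) ≤ C * ENNReal.ofReal (b - a) := by
  have : eVariationOn (f ∘ id) (Icc a b) ≤ C * eVariationOn id (Icc a b) :=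
    h.comp_eVariationOn_le (mapsTo_id _)
  rw [Function.comp_id] at this
  refine this.trans (mul_le_mul_right ?_ _)
  have := (monotoneOn_id (s := Icc a b)).eVariationOn_le (left_mem_Icc.2 hab)
    (right_mem_Icc.2 hab)
  rwa [inter_self] at this


/-- clamped triangle function: 0 on (-∞,0], identity on [0,1], 1 on [1,2], 3-s on [2,3], 0 on [3,∞). -/
noncomputable def gg (s : ℝ) : ℝ := max 0 (min 1 (min s (3 - s)))

lemma gg_cont : Continuous gg := by
  unfold gg; fun_prop

lemma gg_mem (s : ℝ) : gg s ∈ Icc (0:ℝ) 1 := by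
  constructor
  · exact le_max_left _ _
  · unfold gg
    rcases le_total (min 1 (min s (3 - s))) 0 with h | h
    · simp [max_eq_left h]
    · rw [max_eq_right h]; exact min_le_left _ _

lemma gg_eval1 {s : ℝ} (h0 : 0 ≤ s) (h1 : s ≤ 1) : gg s = s := by
  simp only [gg, min_def, max_def]; split_ifs <;> linarith

lemma gg_eval2 {s : ℝ} (h0 : 1 ≤ s) (h1 : s ≤ 2) : gg s = 1 := by
  simp only [gg, min_def, max_def]; split_ifs <;> linarith

lemma gg_eval3 {s : ℝ} (h0 : 2 ≤ s) (h1 : s ≤ 3) : gg s = 3 - s := by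
  simp only [gg, min_def, max_def]; split_ifs <;> linarith

lemma gg_eval0 {s : ℝ} (h : s ≤ 0) : gg s = 0 := by
  simp only [gg, min_def, max_def]; split_ifs <;> linarith

lemma gg_eval4 {s : ℝ} (h : 3 ≤ s) : gg s = 0 := by
  simp only [gg, min_def, max_def]; split_ifs <;> linarith

/-- parametrization of the boundary square `[0,4] → rim`. -/
noncomputable def php (t : ℝ) : E3 :=
  (EuclideanSpace.equiv (Fin 3) ℝ).symm (fun i => if i = 0 then gg t else if i = 1 then gg (t - 1) else 0)

lemma php_apply0 (t : ℝ) : php t 0 = gg t := rfl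
lemma php_apply1 (t : ℝ) : php t 1 = gg (t - 1) := rfl
lemma php_apply2 (t : ℝ) : php t 2 = 0 := rfl

lemma php_cont : Continuous php := by
  apply (EuclideanSpace.equiv (Fin 3) ℝ).symm.continuous.comp
  apply continuous_pi
  intro i
  fin_cases i <;> simp
  · exact gg_cont
  · exact gg_cont.comp (continuous_id.sub continuous_const)
  · exact continuous_const

lemma php_lip0 : LipschitzOnWith 1 php (Icc (0:ℝ) 1) := by
  apply LipschitzOnWith.of_dist_le_mul
  intro x hx y hy
  rw [NNReal.coe_one, one_mul]
  have : dist (php x) (php y) = |x - y| := by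
    rw [dist_eq_coord0 _ _ (by rw [php_apply1, php_apply1, gg_eval0 (by linarith [hx.2]),
        gg_eval0 (by linarith [hy.2])]) (by rw [php_apply2, php_apply2]),
      php_apply0, php_apply0, gg_eval1 hx.1 hx.2, gg_eval1 hy.1 hy.2]
  rw [this, Real.dist_eq]

lemma php_lip1 : LipschitzOnWith 1 php (Icc (1:ℝ) 2) := by
  apply LipschitzOnWith.of_dist_le_mul
  intro x hx y hy
  rw [NNReal.coe_one, one_mul]
  have : dist (php x) (php y) = |(x - 1) - (y - 1)| := by
    rw [dist_eq_coord1 _ _ (by rw [php_apply0, php_apply0, gg_eval2 hx.1 hx.2,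
        gg_eval2 hy.1 hy.2]) (by rw [php_apply2, php_apply2]),
      php_apply1, php_apply1, gg_eval1 (by linarith [hx.1]) (by linarith [hx.2]),
      gg_eval1 (by linarith [hy.1]) (by linarith [hy.2])]
  rw [this, Real.dist_eq]
  apply le_of_eq; congr 1; ring

lemma php_lip2 : LipschitzOnWith 1 php (Icc (2:ℝ) 3) := by
  apply LipschitzOnWith.of_dist_le_mul
  intro x hx y hy
  rw [NNReal.coe_one, one_mul]
  have : dist (php x) (php y) = |(3 - x) - (3 - y)| := by
    rw [dist_eq_coord0 _ _ (by rw [php_apply1, php_apply1, gg_eval2 (by linarith [hx.1])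
        (by linarith [hx.2]), gg_eval2 (by linarith [hy.1]) (by linarith [hy.2])])
      (by rw [php_apply2, php_apply2]),
      php_apply0, php_apply0, gg_eval3 hx.1 hx.2, gg_eval3 hy.1 hy.2]
  rw [this, Real.dist_eq]
  apply le_of_eq; rw [abs_sub_comm]; congr 1; ring

lemma php_lip3 : LipschitzOnWith 1 php (Icc (3:ℝ) 4) := by
  apply LipschitzOnWith.of_dist_le_mul
  intro x hx y hy
  rw [NNReal.coe_one, one_mul]
  have : dist (php x) (php y) = |(3 - (x-1)) - (3 - (y-1))| := by
    rw [dist_eq_coord1 _ _ (by rw [php_apply0, php_apply0, gg_eval4 hx.1, gg_eval4 hy.1])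
      (by rw [php_apply2, php_apply2]),
      php_apply1, php_apply1, gg_eval3 (by linarith [hx.1]) (by linarith [hx.2]),
      gg_eval3 (by linarith [hy.1]) (by linarith [hy.2])]
  rw [this, Real.dist_eq]
  apply le_of_eq; rw [abs_sub_comm]; congr 1; ring

lemma pieceB {f : ℝ → E3} {i u v : ℝ} (hl : LipschitzOnWith 1 f (Icc i (i+1)))
    (huv : u ≤ v) (h : Icc u v ⊆ Icc i (i+1) ∨ u = v) :
    eVariationOn f (Icc u v) ≤ ENNReal.ofReal (v - u) := by
  rcases h with h | rfl
  · have := lipVar (hl.mono h) huv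
    simpa using this
  · have : eVariationOn f (Icc u u) = 0 := by
      apply eVariationOn.subsingleton
      rw [Icc_self]; exact subsingleton_singleton
    rw [this]; exact zero_le

lemma php_var {s t : ℝ} (h0 : 0 ≤ s) (hst : s ≤ t) (h4 : t ≤ 4) :
    eVariationOn php (Icc s t) ≤ ENNReal.ofReal (t - s) := by
  set c1 := min t (max s 1) with hc1
  set c2 := min t (max s 2) with hc2
  set c3 := min t (max s 3) with hc3
  have hsc1 : s ≤ c1 := le_min hst (le_max_left _ _)
  have hc12 : c1 ≤ c2 := min_le_min le_rfl (max_le_max le_rfl (by norm_num))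
  have hc23 : c2 ≤ c3 := min_le_min le_rfl (max_le_max le_rfl (by norm_num))
  have hc3t : c3 ≤ t := min_le_left _ _
  have hc1t : c1 ≤ t := min_le_left _ _
  have hc2t : c2 ≤ t := min_le_left _ _
  have hsc2 : s ≤ c2 := hsc1.trans hc12
  have hsc3 : s ≤ c3 := hsc2.trans hc23
  have split1 : eVariationOn php (Icc s c1) + eVariationOn php (Icc c1 t)
      = eVariationOn php (Icc s t) := by
    simpa [univ_inter] using
      eVariationOn.Icc_add_Icc php (s := univ) hsc1 hc1t (mem_univ c1)
  have split2 : eVariationOn php (Icc c1 c2) + eVariationOn php (Icc c2 t)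
      = eVariationOn php (Icc c1 t) := by
    simpa [univ_inter] using
      eVariationOn.Icc_add_Icc php (s := univ) hc12 hc2t (mem_univ c2)
  have split3 : eVariationOn php (Icc c2 c3) + eVariationOn php (Icc c3 t)
      = eVariationOn php (Icc c2 t) := by
    simpa [univ_inter] using
      eVariationOn.Icc_add_Icc php (s := univ) hc23 hc3t (mem_univ c3)
  have P0 : eVariationOn php (Icc s c1) ≤ ENNReal.ofReal (c1 - s) := by
    apply pieceB (i := 0) (by norm_num [php_lip0]) hsc1
    rcases le_total 1 s with h | h
    · right
      rw [hc1, max_eq_left h, min_eq_right hst]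
    · left
      apply Icc_subset_Icc h0
      calc c1 ≤ max s 1 := min_le_right _ _
        _ ≤ 0 + 1 := by rw [zero_add]; exact max_le h le_rfl
  have P1 : eVariationOn php (Icc c1 c2) ≤ ENNReal.ofReal (c2 - c1) := by
    apply pieceB (i := 1) (by norm_num [php_lip1]) hc12
    rcases le_total t 1 with h | h
    · right
      rw [hc1, hc2, min_eq_left (h.trans (by linarith [le_max_right s (1:ℝ)])),
        min_eq_left (h.trans (by linarith [le_max_right s (2:ℝ)]))]
    · rcases le_total 2 s with h' | h'
      · right
        rw [hc1, hc2, max_eq_left (by linarith), max_eq_left h', min_eq_right hst]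
      · left
        apply Icc_subset_Icc
        · exact le_min h (le_max_right _ _)
        · calc c2 ≤ max s 2 := min_le_right _ _
            _ ≤ 1 + 1 := max_le (by linarith) (by norm_num)
  have P2 : eVariationOn php (Icc c2 c3) ≤ ENNReal.ofReal (c3 - c2) := by
    apply pieceB (i := 2) (by norm_num [php_lip2]) hc23
    rcases le_total t 2 with h | h
    · right
      rw [hc2, hc3, min_eq_left (h.trans (by linarith [le_max_right s (2:ℝ)])),
        min_eq_left (h.trans (by linarith [le_max_right s (3:ℝ)]))]
    · rcases le_total 3 s with h' | h'
      · right
        rw [hc2, hc3, max_eq_left (by linarith), max_eq_left h', min_eq_right hst]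
      · left
        apply Icc_subset_Icc
        · exact le_min h (le_max_right _ _)
        · calc c3 ≤ max s 3 := min_le_right _ _
            _ ≤ 2 + 1 := max_le (by linarith) (by norm_num)
  have P3 : eVariationOn php (Icc c3 t) ≤ ENNReal.ofReal (t - c3) := by
    apply pieceB (i := 3) (by norm_num [php_lip3]) hc3t
    rcases le_total t 3 with h | h
    · right
      rw [hc3, min_eq_left (h.trans (by linarith [le_max_right s (3:ℝ)]))]
    · left
      apply Icc_subset_Icc
      · exact le_min h (le_max_right _ _)
      · norm_num [h4]
  calc eVariationOn php (Icc s t)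
      = eVariationOn php (Icc s c1) + (eVariationOn php (Icc c1 c2) +
        (eVariationOn php (Icc c2 c3) + eVariationOn php (Icc c3 t))) := by
        rw [← split1, ← split2, ← split3]
    _ ≤ ENNReal.ofReal (c1 - s) + (ENNReal.ofReal (c2 - c1) +
        (ENNReal.ofReal (c3 - c2) + ENNReal.ofReal (t - c3))) := by
        gcongr
    _ = ENNReal.ofReal (t - s) := by
        rw [← ENNReal.ofReal_add (by linarith) (by linarith),
          ← ENNReal.ofReal_add (by linarith) (by linarith),
          ← ENNReal.ofReal_add (by linarith) (by linarith)]
        ring_nf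

lemma php_mem (t : ℝ) : php t ∈ bottomRim := by
  refine ⟨⟨gg_mem t, gg_mem (t-1)⟩, ?_, rfl⟩
  rintro ⟨hx, hy⟩
  rw [php_apply0] at hx
  rw [php_apply1] at hy
  rcases le_total t 1 with h | h
  · rw [gg_eval0 (by linarith)] at hy; exact lt_irrefl _ hy.1
  rcases le_total t 2 with h' | h'
  · rw [gg_eval2 h h'] at hx; exact lt_irrefl _ hx.2
  rcases le_total t 3 with h'' | h''
  · rw [gg_eval2 (by linarith) (by linarith)] at hy; exact lt_irrefl _ hy.2
  · rw [gg_eval4 h''] at hx; exact lt_irrefl _ hx.1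

lemma e3_ext {p q : E3} (h : ∀ i, p i = q i) : p = q := PiLp.ext h

lemma php04 : php 0 = php 4 := by
  apply e3_ext
  intro i
  fin_cases i
  · show gg 0 = gg 4
    rw [gg_eval1 le_rfl zero_le_one, gg_eval4 (by norm_num)]
  · show gg (0-1) = gg (4-1)
    rw [gg_eval0 (by norm_num), gg_eval3 (by norm_num) (by norm_num)]; norm_num
  · rfl

lemma php_surj {p : E3} (hp : p ∈ bottomRim) : ∃ s, 0 ≤ s ∧ s ≤ 4 ∧ php s = p := by
  obtain ⟨⟨hx, hy⟩, hni, hz⟩ := hp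
  have hcases : p 1 = 0 ∨ p 0 = 1 ∨ p 1 = 1 ∨ p 0 = 0 := by
    by_contra hcon
    push_neg at hcon
    obtain ⟨h1, h2, h3, h4⟩ := hcon
    exact hni ⟨⟨lt_of_le_of_ne hx.1 (Ne.symm h4), lt_of_le_of_ne hx.2 h2⟩,
      ⟨lt_of_le_of_ne hy.1 (Ne.symm h1), lt_of_le_of_ne hy.2 h3⟩⟩
  rcases hcases with h | h | h | h
  · refine ⟨p 0, hx.1, by linarith [hx.2], e3_ext fun i => ?_⟩
    fin_cases i
    · show gg (p 0) = p 0; exact gg_eval1 hx.1 hx.2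
    · show gg (p 0 - 1) = p 1; rw [gg_eval0 (by linarith [hx.2]), h]
    · show (0:ℝ) = p 2; rw [hz]
  · refine ⟨1 + p 1, by linarith [hy.1], by linarith [hy.2], e3_ext fun i => ?_⟩
    fin_cases i
    · show gg (1 + p 1) = p 0
      rw [gg_eval2 (by linarith [hy.1]) (by linarith [hy.2]), h]
    · show gg (1 + p 1 - 1) = p 1
      rw [show 1 + p 1 - 1 = p 1 by ring, gg_eval1 hy.1 hy.2]
    · show (0:ℝ) = p 2; rw [hz]
  · refine ⟨3 - p 0, by linarith [hx.2], by linarith [hx.1], e3_ext fun i => ?_⟩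
    fin_cases i
    · show gg (3 - p 0) = p 0
      rw [gg_eval3 (by linarith [hx.2]) (by linarith [hx.1])]; ring
    · show gg (3 - p 0 - 1) = p 1
      rw [show 3 - p 0 - 1 = 2 - p 0 by ring,
        gg_eval2 (by linarith [hx.2]) (by linarith [hx.1]), h]
    · show (0:ℝ) = p 2; rw [hz]
  · refine ⟨4 - p 1, by linarith [hy.2], by linarith [hy.1], e3_ext fun i => ?_⟩
    fin_cases i
    · show gg (4 - p 1) = p 0
      rw [gg_eval4 (by linarith [hy.2]), h]
    · show gg (4 - p 1 - 1) = p 1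
      rw [show 4 - p 1 - 1 = 3 - p 1 by ring,
        gg_eval3 (by linarith [hy.2]) (by linarith [hy.1])]; ring
    · show (0:ℝ) = p 2; rw [hz]

lemma intrinsicDist_le {X : Set E3} {x y : E3} {γ : ℝ → E3}
    (hc : ContinuousOn γ (Icc 0 1)) (hm : MapsTo γ (Icc 0 1) X)
    (h0 : γ 0 = x) (h1 : γ 1 = y) :
    intrinsicDist X x y ≤ eVariationOn γ (Icc 0 1) := by
  unfold intrinsicDist
  exact iInf_le_of_le γ (iInf_le_of_le hc (iInf_le_of_le hm
    (iInf_le_of_le h0 (iInf_le_of_le h1 le_rfl))))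

lemma intrinsicDist_le_of_eq {X : Set E3} {x y : E3} (h : x = y) (hx : x ∈ X) :
    intrinsicDist X x y ≤ 0 := by
  have hconst : eVariationOn (fun _ : ℝ => x) (Icc 0 1) = 0 := by
    apply eVariationOn.constant_on
    intro p hp q hq
    simp only [mem_image] at hp hq
    obtain ⟨_, _, rfl⟩ := hp; obtain ⟨_, _, rfl⟩ := hq; rfl
  exact (intrinsicDist_le continuousOn_const (fun u _ => hx) rfl h).trans hconst.le

lemma php_direct {s t : ℝ} (h0 : 0 ≤ s) (hst : s ≤ t) (h4 : t ≤ 4) :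
    intrinsicDist bottomRim (php s) (php t) ≤ ENNReal.ofReal (t - s) := by
  rcases eq_or_lt_of_le hst with rfl | hlt
  · exact (intrinsicDist_le_of_eq rfl (php_mem s)).trans zero_le
  set γ : ℝ → E3 := fun u => php ((t - s) * u + s) with hγ
  have hc : ContinuousOn γ (Icc 0 1) :=
    (php_cont.comp (by fun_prop)).continuousOn
  have hmono : MonotoneOn (fun u : ℝ => (t - s) * u + s) (Icc 0 1) := by
    intro x _ y _ hxy
    have : 0 ≤ t - s := by linarith
    dsimp; nlinarith
  have hvar : eVariationOn γ (Icc 0 1) ≤ ENNReal.ofReal (t - s) := by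
    have := eVariationOn.comp_eq_of_monotoneOn php (fun u : ℝ => (t - s) * u + s) hmono
    rw [hγ]
    show eVariationOn (php ∘ fun u : ℝ => (t - s) * u + s) (Icc 0 1) ≤ _
    rw [this, Set.image_affine_Icc' (by linarith : (0:ℝ) < t - s) s 0 1]
    have e1 : (t - s) * 0 + s = s := by ring
    have e2 : (t - s) * 1 + s = t := by ring
    rw [e1, e2]
    exact php_var h0 hst h4
  refine (intrinsicDist_le hc (fun u _ => php_mem _) ?_ ?_).trans hvar
  · show php ((t - s) * 0 + s) = php s; norm_num
  · show php ((t - s) * 1 + s) = php t; ring_nf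

lemma php_wrap {s t : ℝ} (h0 : 0 ≤ s) (hst : s ≤ t) (h4 : t ≤ 4) :
    intrinsicDist bottomRim (php s) (php t) ≤ ENNReal.ofReal (s + (4 - t)) := by
  set L : ℝ := s + (4 - t) with hL
  have hL0 : 0 ≤ L := by linarith
  rcases eq_or_lt_of_le hL0 with hLeq | hLpos
  · -- L = 0 : s = 0, t = 4
    have hs0 : s = 0 := by linarith
    have ht4 : t = 4 := by linarith
    subst hs0; subst ht4
    exact (intrinsicDist_le_of_eq php04 (php_mem 0)).trans zero_le
  set m : ℝ := s / L with hm
  have hm0 : 0 ≤ m := div_nonneg h0 hL0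
  have hm1 : m ≤ 1 := by
    rw [hm, div_le_one hLpos]; linarith
  have hLm : L * m = s := by
    rw [hm]; field_simp
  set γ : ℝ → E3 := fun u => if u ≤ m then php (s - L * u) else php (s + 4 - L * u) with hγ
  have hbd : ∀ u : ℝ, u = m → php (s - L * u) = php (s + 4 - L * u) := by
    intro u hu
    rw [hu, hLm]
    norm_num [php04]
  have hc : ContinuousOn γ (Icc 0 1) := by
    apply Continuous.continuousOn
    exact Continuous.if_le (php_cont.comp (by fun_prop)) (php_cont.comp (by fun_prop))
      continuous_id continuous_const (fun u hu => hbd u hu)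
  have hmaps : MapsTo γ (Icc 0 1) bottomRim := by
    intro u _
    rw [hγ]
    dsimp only
    split_ifs <;> exact php_mem _
  have hend0 : γ 0 = php s := by
    rw [hγ]; dsimp only
    rw [if_pos hm0]; norm_num
  have hend1 : γ 1 = php t := by
    rw [hγ]; dsimp only
    split_ifs with h
    · have : m = 1 := le_antisymm hm1 h
      have hs : L = s := by
        rw [← hLm, this, mul_one]
      have ht : t = 4 := by rw [hL] at hs; linarith
      rw [mul_one, hs, sub_self, ht, php04]
    · congr 1; rw [hL]; ring
  -- variation bound
  have eq1 : EqOn γ (php ∘ fun u : ℝ => s - L * u) (Icc 0 m) := by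
    intro u hu
    rw [hγ]; dsimp only [Function.comp]
    rw [if_pos hu.2]
  have eq2 : EqOn γ (php ∘ fun u : ℝ => s + 4 - L * u) (Icc m 1) := by
    intro u hu
    rw [hγ]; dsimp only [Function.comp]
    split_ifs with h
    · exact hbd u (le_antisymm h hu.1)
    · rfl
  have anti1 : AntitoneOn (fun u : ℝ => s - L * u) (Icc 0 m) := by
    intro x _ y _ hxy; dsimp; nlinarith
  have anti2 : AntitoneOn (fun u : ℝ => s + 4 - L * u) (Icc m 1) := by
    intro x _ y _ hxy; dsimp; nlinarith
  have img1 : (fun u : ℝ => s - L * u) '' Icc 0 m = Icc 0 s := by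
    have hcomp : (fun u : ℝ => s - L * u) = (fun x : ℝ => s - x) ∘ (L * ·) := rfl
    rw [hcomp, Set.image_comp, Set.image_mul_left_Icc hL0 hm0, Set.image_const_sub_Icc]
    rw [mul_zero, hLm, sub_self, sub_zero]
  have img2 : (fun u : ℝ => s + 4 - L * u) '' Icc m 1 = Icc t 4 := by
    have hcomp : (fun u : ℝ => s + 4 - L * u) = (fun x : ℝ => (s + 4) - x) ∘ (L * ·) := rfl
    have h1 : s + 4 - L = t := by rw [hL]; ring
    have h2 : s + 4 - s = (4:ℝ) := by ring
    rw [hcomp, Set.image_comp, Set.image_mul_left_Icc hL0 hm1, Set.image_const_sub_Icc,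
      mul_one, hLm, h1, h2]
  have var1 : eVariationOn γ (Icc 0 m) ≤ ENNReal.ofReal s := by
    rw [eVariationOn.eq_of_eqOn eq1,
      eVariationOn.comp_eq_of_antitoneOn php _ anti1, img1]
    exact (php_var le_rfl h0 (by linarith)).trans (by rw [sub_zero])
  have var2 : eVariationOn γ (Icc m 1) ≤ ENNReal.ofReal (4 - t) := by
    rw [eVariationOn.eq_of_eqOn eq2,
      eVariationOn.comp_eq_of_antitoneOn php _ anti2, img2]
    exact php_var (by linarith) h4 le_rfl
  have split : eVariationOn γ (Icc 0 m) + eVariationOn γ (Icc m 1)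
      = eVariationOn γ (Icc 0 1) := by
    simpa [univ_inter] using
      eVariationOn.Icc_add_Icc γ (s := univ) hm0 hm1 (mem_univ m)
  refine (intrinsicDist_le hc hmaps hend0 hend1).trans ?_
  rw [← split, ENNReal.ofReal_add h0 (by linarith : (0:ℝ) ≤ 4 - t)]
  exact add_le_add var1 var2

lemma intrinsicDist_symm_le (X : Set E3) (x y : E3) :
    intrinsicDist X x y ≤ intrinsicDist X y x := by
  unfold intrinsicDist
  refine le_iInf fun γ => le_iInf fun hc => le_iInf fun hm =>
    le_iInf fun h0 => le_iInf fun h1 => ?_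
  set γ' : ℝ → E3 := fun u => γ (1 - u) with hγ'
  have himg : (fun u : ℝ => 1 - u) '' Icc 0 1 = Icc (0:ℝ) 1 := by
    rw [Set.image_const_sub_Icc]; norm_num
  have hc' : ContinuousOn γ' (Icc 0 1) := by
    apply hc.comp (by fun_prop)
    intro u hu
    rw [← himg]; exact mem_image_of_mem _ hu
  have hm' : MapsTo γ' (Icc 0 1) X := by
    intro u hu
    apply hm
    rw [← himg]; exact mem_image_of_mem _ hu
  have hvar : eVariationOn γ' (Icc 0 1) = eVariationOn γ (Icc 0 1) := by
    have anti : AntitoneOn (fun u : ℝ => 1 - u) (Icc (0:ℝ) 1) := by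
      intro p _ q _ hpq; dsimp; linarith
    rw [hγ']
    show eVariationOn (γ ∘ fun u : ℝ => 1 - u) (Icc 0 1) = _
    rw [eVariationOn.comp_eq_of_antitoneOn γ _ anti, himg]
  have e0 : γ' 0 = x := by rw [hγ']; norm_num [h1]
  have e1 : γ' 1 = y := by rw [hγ']; norm_num [h0]
  exact (intrinsicDist_le hc' hm' e0 e1).trans hvar.le

lemma intrinsicDist_symm (X : Set E3) (x y : E3) :
    intrinsicDist X x y = intrinsicDist X y x :=
  le_antisymm (intrinsicDist_symm_le X x y) (intrinsicDist_symm_le X y x)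

lemma rim_le_two {a b : E3} (ha : a ∈ bottomRim) (hb : b ∈ bottomRim) :
    intrinsicDist bottomRim a b ≤ 2 := by
  obtain ⟨s, hs0, hs4, rfl⟩ := php_surj ha
  obtain ⟨t, ht0, ht4, rfl⟩ := php_surj hb
  have key : ∀ s t : ℝ, 0 ≤ s → s ≤ t → t ≤ 4 →
      intrinsicDist bottomRim (php s) (php t) ≤ 2 := by
    intro s t h0 hst h4
    rcases le_total (t - s) 2 with h | h
    · refine (php_direct h0 hst h4).trans ?_
      calc ENNReal.ofReal (t - s) ≤ ENNReal.ofReal 2 := ENNReal.ofReal_le_ofReal h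
        _ = 2 := by norm_num
    · refine (php_wrap h0 hst h4).trans ?_
      calc ENNReal.ofReal (s + (4 - t)) ≤ ENNReal.ofReal 2 :=
          ENNReal.ofReal_le_ofReal (by linarith)
        _ = 2 := by norm_num
  rcases le_total s t with h | h
  · exact key s t hs0 h ht4
  · rw [intrinsicDist_symm]
    exact key t s ht0 h hs4

noncomputable def proj3 (p : E3) : E3 :=
  (EuclideanSpace.equiv (Fin 3) ℝ).symm (fun i => if i = 2 then 0 else p i)

lemma proj3_apply0 (p : E3) : proj3 p 0 = p 0 := rfl
lemma proj3_apply1 (p : E3) : proj3 p 1 = p 1 := rfl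
lemma proj3_apply2 (p : E3) : proj3 p 2 = 0 := rfl

lemma proj3_lip : LipschitzWith 1 proj3 := by
  apply LipschitzWith.of_dist_le_mul
  intro p q
  rw [NNReal.coe_one, one_mul, EuclideanSpace.dist_eq, EuclideanSpace.dist_eq,
    Fin.sum_univ_three, Fin.sum_univ_three, proj3_apply0, proj3_apply0,
    proj3_apply1, proj3_apply1, proj3_apply2, proj3_apply2, dist_self]
  apply Real.sqrt_le_sqrt
  have := sq_nonneg (dist (p 2) (q 2))
  norm_num


lemma rim_subset : bottomRim ⊆ emptiedCube := by
  rintro p ⟨⟨hx, hy⟩, hni, hz⟩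
  constructor
  · intro i
    fin_cases i
    · exact hx
    · exact hy
    · show p 2 ∈ Icc (0:ℝ) 1
      rw [hz]; exact ⟨le_refl 0, zero_le_one⟩
  · rintro ⟨h0', h1', _⟩
    exact hni ⟨h0', h1'⟩

/-- For points of the bottom rim, the intrinsic distance in the emptied cube equals the
intrinsic distance computed within the rim itself (the shorter arc around the square). -/
theorem intrinsicDist_emptiedCube_eq_intrinsicDist_rim
    (a b : EuclideanSpace ℝ (Fin 3)) (ha : a ∈ bottomRim) (hb : b ∈ bottomRim) :
    intrinsicDist emptiedCube a b = intrinsicDist bottomRim a b := by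
  refine le_antisymm ?_ ?_
  · unfold intrinsicDist
    refine le_iInf fun γ => le_iInf fun hc => le_iInf fun hm =>
      le_iInf fun h0 => le_iInf fun h1 => ?_
    exact intrinsicDist_le hc (hm.mono_right rim_subset) h0 h1
  · unfold intrinsicDist
    refine le_iInf fun γ => le_iInf fun hc => le_iInf fun hm =>
      le_iInf fun h0 => le_iInf fun h1 => ?_
    show intrinsicDist bottomRim a b ≤ eVariationOn γ (Icc 0 1)
    by_cases hcase : ∀ u ∈ Icc (0:ℝ) 1, ¬(γ u 0 ∈ Ioo (0:ℝ) 1 ∧ γ u 1 ∈ Ioo (0:ℝ) 1)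
    · set γ' : ℝ → E3 := proj3 ∘ γ with hγ'
      have hc' : ContinuousOn γ' (Icc 0 1) := proj3_lip.continuous.comp_continuousOn hc
      have hm' : MapsTo γ' (Icc 0 1) bottomRim := by
        intro u hu
        obtain ⟨hcube, _⟩ := hm hu
        refine ⟨⟨?_, ?_⟩, ?_, proj3_apply2 _⟩
        · rw [hγ', Function.comp_apply, proj3_apply0]; exact hcube 0
        · rw [hγ', Function.comp_apply, proj3_apply1]; exact hcube 1
        · rw [hγ', Function.comp_apply, proj3_apply0, proj3_apply1]
          exact hcase u hu
      have e0 : γ' 0 = a := by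
        rw [hγ', Function.comp_apply, h0]
        apply e3_ext
        intro i
        fin_cases i
        · rfl
        · rfl
        · show proj3 a 2 = a 2
          rw [proj3_apply2, ha.2.2]
      have e1 : γ' 1 = b := by
        rw [hγ', Function.comp_apply, h1]
        apply e3_ext
        intro i
        fin_cases i
        · rfl
        · rfl
        · show proj3 b 2 = b 2
          rw [proj3_apply2, hb.2.2]
      refine (intrinsicDist_le hc' hm' e0 e1).trans ?_
      have := (proj3_lip.lipschitzOnWith (s := univ)).comp_eVariationOn_le
        (mapsTo_univ γ (Icc 0 1))
      simpa using this
    · push_neg at hcase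
      obtain ⟨u, hu, h0u, h1u⟩ := hcase
      obtain ⟨hcube, hncol⟩ := hm hu
      have hz : γ u 2 = 1 := by
        by_contra hne
        exact hncol ⟨h0u, h1u, ⟨(hcube 2).1, lt_of_le_of_ne (hcube 2).2 hne⟩⟩
      refine (rim_le_two ha hb).trans ?_
      have d1 : (1:ℝ≥0∞) ≤ edist (γ 0) (γ u) := by
        rw [edist_dist]
        have hd : (1:ℝ) ≤ dist (γ 0) (γ u) := by
          calc (1:ℝ) = dist (γ 0 2) (γ u 2) := by
                rw [h0, ha.2.2, hz, Real.dist_eq]; norm_num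
            _ ≤ dist (γ 0) (γ u) := coord_dist_le _ _ 2
        calc (1:ℝ≥0∞) = ENNReal.ofReal 1 := by norm_num
          _ ≤ ENNReal.ofReal (dist (γ 0) (γ u)) := ENNReal.ofReal_le_ofReal hd
      have d2 : (1:ℝ≥0∞) ≤ edist (γ u) (γ 1) := by
        rw [edist_dist]
        have hd : (1:ℝ) ≤ dist (γ u) (γ 1) := by
          calc (1:ℝ) = dist (γ u 2) (γ 1 2) := by
                rw [h1, hb.2.2, hz, Real.dist_eq]; norm_num
            _ ≤ dist (γ u) (γ 1) := coord_dist_le _ _ 2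
        calc (1:ℝ≥0∞) = ENNReal.ofReal 1 := by norm_num
          _ ≤ ENNReal.ofReal (dist (γ u) (γ 1)) := ENNReal.ofReal_le_ofReal hd
      have split : eVariationOn γ (Icc 0 u) + eVariationOn γ (Icc u 1)
          = eVariationOn γ (Icc 0 1) := by
        simpa [univ_inter] using
          eVariationOn.Icc_add_Icc γ (s := univ) hu.1 hu.2 (mem_univ u)
      calc (2:ℝ≥0∞) = 1 + 1 := by norm_num
        _ ≤ edist (γ 0) (γ u) + edist (γ u) (γ 1) := add_le_add d1 d2
        _ ≤ eVariationOn γ (Icc 0 u) + eVariationOn γ (Icc u 1) :=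
            add_le_add (eVariationOn.edist_le γ ⟨le_rfl, hu.1⟩ ⟨hu.1, le_rfl⟩)
              (eVariationOn.edist_le γ ⟨le_rfl, hu.2⟩ ⟨hu.2, le_rfl⟩)
        _ = eVariationOn γ (Icc 0 1) := split
end

section
/- Let (X,d) be an extended metric space (d takes values in [0,∞]), let ~ be an equivalence relation on X, and let A ⊆ X be a closed set containing every point of X whose equivalence class contains a point other than itself. Define the quotient chain pseudometric D(a,b) = inf { Σ_{i=0}^{k} d(x_i, y_i) : k ≥ 0, x_0 = a, y_k = b, and y_i ~ x_{i+1} for all 0 ≤ i < k }. Then for every a ∉ A and every b ∈ X, D(a,b) ≥ min( d(a,b), dist(a,A) ); in particular, if a ∉ A and b ≠ a then D(a,b) > 0. -/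
open scoped ENNReal

/-- The quotient chain pseudometric associated to an extended metric and an equivalence
relation `r`: the infimum over all finite chains `x₀ = a, y₀, x₁, y₁, …, xₖ, yₖ = b` with
`yᵢ r xᵢ₊₁` of `∑ edist xᵢ yᵢ`. -/
noncomputable def chainDist {X : Type*} [EMetricSpace X] (r : X → X → Prop) (a b : X) :
    ℝ≥0∞ :=
  ⨅ (k : ℕ) (x : Fin (k + 1) → X) (y : Fin (k + 1) → X) (_ : x 0 = a)
    (_ : y (Fin.last k) = b) (_ : ∀ i : Fin k, r (y i.castSucc) (x i.succ)),
    ∑ i, edist (x i) (y i)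

private lemma chain_key {X : Type*} [EMetricSpace X] (x y : ℕ → X) :
    ∀ n : ℕ, (∀ j < n, y j = x (j + 1)) →
      edist (x 0) (y n) ≤ ∑ j ∈ Finset.range (n + 1), edist (x j) (y j) := by
  intro n
  induction n with
  | zero => intro _; simp
  | succ m ih =>
    intro h
    rw [Finset.sum_range_succ]
    calc edist (x 0) (y (m + 1)) ≤ edist (x 0) (y m) + edist (y m) (y (m + 1)) :=
          edist_triangle _ _ _
      _ ≤ (∑ j ∈ Finset.range (m + 1), edist (x j) (y j)) + edist (x (m + 1)) (y (m + 1)) :=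
          add_le_add (ih fun j hj => h j (hj.trans (Nat.lt_succ_self m)))
            (le_of_eq (by rw [h m (Nat.lt_succ_self m)]))

/-- Let `A` be a closed set containing every point whose `r`-equivalence class is not a
singleton. Then for `a ∉ A` and any `b`, the chain pseudometric `D(a,b)` is at least
`min (edist a b) (infEdist a A)`; in particular `D(a,b) > 0` whenever `b ≠ a`. -/
theorem chainDist_ge_min_of_not_mem_closed
    {X : Type*} [EMetricSpace X] (r : X → X → Prop) (hr : Equivalence r)
    (A : Set X) (hA : IsClosed A)
    (hAr : ∀ x y : X, r x y → y ≠ x → x ∈ A)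
    (a b : X) (ha : a ∉ A) :
    min (edist a b) (EMetric.infEdist a A) ≤ chainDist r a b ∧
      (b ≠ a → 0 < chainDist r a b) := by
  have main : min (edist a b) (EMetric.infEdist a A) ≤ chainDist r a b := by
    rw [chainDist]
    simp only [le_iInf_iff]
    intro k x y hx0 hylast hlink
    -- ℕ-indexed versions
    set x' : ℕ → X := fun j => if h : j < k + 1 then x ⟨j, h⟩ else b with hx'
    set y' : ℕ → X := fun j => if h : j < k + 1 then y ⟨j, h⟩ else b with hy'
    have hsum : ∑ i, edist (x i) (y i)
        = ∑ j ∈ Finset.range (k + 1), edist (x' j) (y' j) := by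
      rw [← Fin.sum_univ_eq_sum_range (fun j => edist (x' j) (y' j)) (k + 1)]
      refine Finset.sum_congr rfl fun i _ => ?_
      simp [hx', hy', i.isLt, Fin.eta, Nat.lt_succ_iff.mp i.isLt]
    have hx'0 : x' 0 = a := by simpa [hx'] using hx0
    have hy'k : y' k = b := by
      simp only [hy', Nat.lt_succ_self, dif_pos]
      exact hylast
    have hlink' : ∀ j < k, r (y' j) (x' (j + 1)) := by
      intro j hj
      have h1 : j < k + 1 := hj.trans (Nat.lt_succ_self k)
      have h2 : j + 1 < k + 1 := Nat.succ_lt_succ hj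
      simp only [hx', hy', dif_pos h1, dif_pos h2]
      have := hlink ⟨j, hj⟩
      simpa [Fin.castSucc, Fin.succ] using this
    rw [hsum]
    by_cases hall : ∀ j < k, y' j = x' (j + 1)
    · refine le_trans (min_le_left _ _) ?_
      have := chain_key x' y' k hall
      rwa [hx'0, hy'k] at this
    · push_neg at hall
      have hex : ∃ j, j < k ∧ y' j ≠ x' (j + 1) := hall
      classical
      let j := Nat.find hex
      obtain ⟨hjk, hjne⟩ : j < k ∧ y' j ≠ x' (j + 1) := Nat.find_spec hex
      have hmin : ∀ j' < j, y' j' = x' (j' + 1) := by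
        intro j' hj'
        by_contra hne
        exact Nat.find_min hex hj' ⟨hj'.trans hjk, hne⟩
      have hyA : y' j ∈ A := hAr _ _ (hlink' j hjk) (fun h => hjne h.symm)
      refine le_trans (min_le_right _ _) ?_
      calc EMetric.infEdist a A ≤ edist a (y' j) := EMetric.infEdist_le_edist_of_mem hyA
        _ ≤ ∑ i ∈ Finset.range (j + 1), edist (x' i) (y' i) := by
            rw [← hx'0]; exact chain_key x' y' j hmin
        _ ≤ ∑ i ∈ Finset.range (k + 1), edist (x' i) (y' i) :=
            Finset.sum_le_sum_of_subset (Finset.range_subset_range.2 (Nat.succ_le_succ hjk.le))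
  refine ⟨main, fun hba => ?_⟩
  refine lt_of_lt_of_le (lt_min ?_ ?_) main
  · exact edist_pos.mpr fun h => hba h.symm
  · rw [← hA.closure_eq] at ha
    exact EMetric.infEdist_pos_iff_notMem_closure.mpr ha
end
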